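/- A Borel subset B of the Baire space ω^ω belongs to the tree ideal s₀ if and only if B is countable. -/

import Mathlib

open Cardinal Set MeasureTheory

/-- A tree on ω: a nonempty set of finite sequences closed under initial segments. -/
def IsTree (T : Set (List ℕ)) : Prop :=
  T.Nonempty ∧ ∀ s ∈ T, ∀ n : ℕ, s.take n ∈ T

/-- The body of a tree: all infinite branches. -/
def treeBody (T : Set (List ℕ)) : Set (ℕ → ℕ) :=
  {x | ∀ n : ℕ, (List.ofFn fun i : Fin n => x i) ∈ T}

/-- Immediate successors of a node in a tree. -/
def succs (T : Set (List ℕ)) (t : List ℕ) : Set ℕ := {n | t ++ [n] ∈ T}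

/-- Sacks (perfect) tree: every node has an extension with at least two immediate successors. -/
def IsSacksTree (T : Set (List ℕ)) : Prop :=
  IsTree T ∧ ∀ s ∈ T, ∃ t ∈ T, s <+: t ∧ (succs T t).Nontrivial

/-- Miller tree: every node has an extension with infinitely many immediate successors. -/
def IsMillerTree (T : Set (List ℕ)) : Prop :=
  IsTree T ∧ ∀ s ∈ T, ∃ t ∈ T, s <+: t ∧ (succs T t).Infinite

/-- Laver tree: has a stem (a node comparable with every node) such that every node
extending the stem has infinitely many immediate successors. -/
def IsLaverTree (T : Set (List ℕ)) : Prop :=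
  IsTree T ∧ ∃ s ∈ T, (∀ t ∈ T, s <+: t ∨ t <+: s) ∧
    ∀ t ∈ T, s <+: t → (succs T t).Infinite

/-- Complete Laver tree: every node has infinitely many immediate successors. -/
def IsCompleteLaverTree (T : Set (List ℕ)) : Prop :=
  IsTree T ∧ ∀ t ∈ T, (succs T t).Infinite

/-- The tree ideal t₀ associated with a family of trees 𝕋. -/
def treeIdeal (𝕋 : Set (Set (List ℕ))) : Set (Set (ℕ → ℕ)) :=
  {A | ∀ P ∈ 𝕋, ∃ Q ∈ 𝕋, Q ⊆ P ∧ treeBody Q ∩ A = ∅}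

/-- t-measurability with respect to a family of trees 𝕋. -/
def TMeasurable (𝕋 : Set (Set (List ℕ))) (A : Set (ℕ → ℕ)) : Prop :=
  ∀ P ∈ 𝕋, ∃ Q ∈ 𝕋, Q ⊆ P ∧ (treeBody Q ⊆ A ∨ treeBody Q ∩ A = ∅)

/-- 𝕋-Bernstein set: meets and omits the body of every tree in 𝕋. -/
def TBernstein (𝕋 : Set (Set (List ℕ))) (B : Set (ℕ → ℕ)) : Prop :=
  ∀ T ∈ 𝕋, (B ∩ treeBody T).Nonempty ∧ (B \ treeBody T).Nonempty

/- Auxiliary lemmas -/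
-- basic lemmas
lemma mem_of_prefix {T : Set (List ℕ)} (hT : IsTree T) {s t : List ℕ}
    (ht : t ∈ T) (h : s <+: t) : s ∈ T := by
  obtain ⟨r, rfl⟩ := h
  have := hT.2 _ ht s.length
  simpa using this

lemma nil_mem {T : Set (List ℕ)} (hT : IsTree T) : ([] : List ℕ) ∈ T := by
  obtain ⟨s, hs⟩ := hT.1
  have := hT.2 s hs 0
  simpa using this

lemma treeBody_mono {Q P : Set (List ℕ)} (h : Q ⊆ P) : treeBody Q ⊆ treeBody P :=
  fun _ hx n => h (hx n)

/-- every node of a Sacks tree has a proper extension in the tree -/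
lemma exists_proper_ext {T : Set (List ℕ)} (hT : IsSacksTree T) {s : List ℕ} (hs : s ∈ T) :
    ∃ t ∈ T, s <+: t ∧ s.length < t.length := by
  obtain ⟨t, htT, hst, a, ha, b, hb, hab⟩ := hT.2 s hs
  exact ⟨t ++ [a], ha, hst.trans ⟨[a], rfl⟩, by
    have := hst.length_le
    simp; omega⟩

lemma sacks_body_nonempty {T : Set (List ℕ)} (hT : IsSacksTree T) :
    (treeBody T).Nonempty := by
  have hstep : ∀ s : List ℕ, ∃ t : List ℕ, s ∈ T → (t ∈ T ∧ s <+: t ∧ s.length < t.length) := by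
    intro s
    by_cases hs : s ∈ T
    · obtain ⟨t, h1, h2, h3⟩ := exists_proper_ext hT hs
      exact ⟨t, fun _ => ⟨h1, h2, h3⟩⟩
    · exact ⟨s, fun h => absurd h hs⟩
  choose f hf using hstep
  set F : ℕ → List ℕ := fun n => Nat.rec ([] : List ℕ) (fun _ t => f t) n with hF
  have hFmem : ∀ n, F n ∈ T := by
    intro n; induction n with
    | zero => exact nil_mem hT.1
    | succ n ih => exact (hf _ ih).1
  have hFsucc : ∀ n, F n <+: F (n + 1) ∧ (F n).length < (F (n+1)).length := by
    intro n; exact ⟨(hf _ (hFmem n)).2.1, (hf _ (hFmem n)).2.2⟩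
  have hlen : ∀ n, n ≤ (F n).length := by
    intro n; induction n with
    | zero => simp
    | succ n ih => have := (hFsucc n).2; omega
  have hchain : ∀ m n, m ≤ n → F m <+: F n := by
    intro m n h
    induction n with
    | zero => exact Nat.le_zero.mp h ▸ List.prefix_rfl
    | succ n ih =>
      rcases Nat.lt_or_ge m (n+1) with h' | h'
      · exact (ih (by omega)).trans (hFsucc n).1
      · have : m = n + 1 := by omega
        exact this ▸ List.prefix_rfl
  refine ⟨fun i => (F (i+1)).getD i 0, fun n => ?_⟩
  have key : (List.ofFn fun i : Fin n => (F (i+1)).getD i 0) = (F n).take n := by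
    apply List.ext_getElem
    · simp [Nat.min_eq_left (hlen n)]
    · intro i h1 h2
      simp only [List.getElem_ofFn, List.getElem_take]
      have hin : i < n := by simpa using h1
      have hi1 : i < (F (i+1)).length := lt_of_lt_of_le (Nat.lt_succ_self i) (hlen (i+1))
      rw [List.getD_eq_getElem _ _ hi1]
      rcases le_or_gt (i+1) n with h | h
      · exact (hchain _ _ h).getElem hi1
      · have : n = i + 1 := by omega
        subst this; rfl
  rw [key]
  exact hT.1.2 _ (hFmem n) n

/-- the tree of initial segments of members of a set K -/
def segTree (K : Set (ℕ → ℕ)) : Set (List ℕ) :=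
  {l | ∃ y ∈ K, l = List.ofFn fun i : Fin l.length => y i}

lemma segTree_isTree {K : Set (ℕ → ℕ)} (hK : K.Nonempty) : IsTree (segTree K) := by
  obtain ⟨y, hy⟩ := hK
  constructor
  · exact ⟨[], y, hy, by simp⟩
  · rintro s ⟨z, hz, hs⟩ n
    have hsget : ∀ i, i < s.length → s.getD i 0 = z i := by
      intro i h
      rw [hs, List.getD_eq_getElem _ _ (by simpa using h)]
      simp
    refine ⟨z, hz, ?_⟩
    apply List.ext_getElem
    · simp
    · intro i h1 h2
      simp only [List.getElem_ofFn]
      rw [List.getElem_take]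
      have hi : i < s.length := by simp at h1; omega
      rw [← hsget i hi, List.getD_eq_getElem _ _ hi]

lemma ofFn_mem_segTree {K : Set (ℕ → ℕ)} {y : ℕ → ℕ} (hy : y ∈ K) (n : ℕ) :
    (List.ofFn fun i : Fin n => y i) ∈ segTree K := by
  refine ⟨y, hy, ?_⟩
  apply List.ext_getElem <;> simp

lemma subset_treeBody_segTree {K : Set (ℕ → ℕ)} : K ⊆ treeBody (segTree K) :=
  fun y hy n => ofFn_mem_segTree hy n

lemma treeBody_segTree_subset {K : Set (ℕ → ℕ)} (hK : IsClosed K) :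
    treeBody (segTree K) ⊆ K := by
  intro x hx
  have : ∀ n : ℕ, ∃ y ∈ K, ∀ i < n, y i = x i := by
    intro n
    obtain ⟨y, hy, hxy⟩ := hx n
    refine ⟨y, hy, fun i hi => ?_⟩
    have := congrArg (fun l => l.getD i 0) hxy
    simpa [List.getD_eq_getElem, hi] using this.symm
  choose y hyK hyx using this
  have htend : Filter.Tendsto y Filter.atTop (nhds x) := by
    rw [tendsto_pi_nhds]
    intro i
    apply Filter.Tendsto.congr' _ tendsto_const_nhds
    filter_upwards [Filter.eventually_ge_atTop (i+1)] with n hn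
    exact (hyx n i (by omega)).symm
  exact hK.mem_of_tendsto htend (Filter.Eventually.of_forall hyK)

lemma ofFn_prefix_ofFn (x : ℕ → ℕ) {m n : ℕ} (h : m ≤ n) :
    (List.ofFn fun i : Fin m => x i) <+: (List.ofFn fun i : Fin n => x i) := by
  rw [List.prefix_iff_eq_take]
  apply List.ext_getElem
  · simp [h]
  · intro i h1 h2
    simp [List.getElem_take]

/-- the tree of the range of a continuous injection from Cantor space is Sacks -/
lemma segTree_sacks {f : (ℕ → Bool) → (ℕ → ℕ)} (hc : Continuous f) (hi : Function.Injective f) :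
    IsSacksTree (segTree (Set.range f)) := by
  refine ⟨segTree_isTree (Set.range_nonempty f), ?_⟩
  rintro s ⟨y, ⟨z, rfl⟩, hs⟩
  -- flip coordinate k of z
  set zk : ℕ → (ℕ → Bool) := fun k => Function.update z k (!(z k)) with hzk
  have hzkne : ∀ k, zk k ≠ z := by
    intro k h
    have := congrFun h k
    simp [hzk, Function.update_self] at this
  have htend : Filter.Tendsto zk Filter.atTop (nhds z) := by
    rw [tendsto_pi_nhds]
    intro i
    apply Filter.Tendsto.congr' _ tendsto_const_nhds
    filter_upwards [Filter.eventually_ge_atTop (i+1)] with k hk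
    simp [hzk, Function.update_of_ne (by omega : i ≠ k)]
  have hftend : Filter.Tendsto (fun k => f (zk k)) Filter.atTop (nhds (f z)) :=
    (hc.tendsto z).comp htend
  rw [tendsto_pi_nhds] at hftend
  have hev : ∀ᶠ k in Filter.atTop, ∀ i < s.length, f (zk k) i = f z i := by
    have : ∀ i : ℕ, i < s.length → ∀ᶠ k in Filter.atTop, f (zk k) i = f z i := by
      intro i _
      have := hftend i
      exact this (by simp : {f z i} ∈ nhds (f z i))
    have := (Filter.eventually_all_finite (Set.finite_Iio s.length)).2
      (fun i hi => this i hi)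
    filter_upwards [this] with k hk i hi
    exact hk i hi
  obtain ⟨k, hk⟩ := hev.exists
  have hne : f (zk k) ≠ f z := fun h => hzkne k (hi h)
  -- least point of difference
  have hex : ∃ d, f (zk k) d ≠ f z d := by
    by_contra h
    push_neg at h
    exact hne (funext h)
  set d := Nat.find hex with hd
  have hdne : f (zk k) d ≠ f z d := Nat.find_spec hex
  have hdlt : ∀ i < d, f (zk k) i = f z i := fun i hi => by
    have := Nat.find_min hex hi
    simpa using this
  have hsd : s.length ≤ d := by
    by_contra h
    push_neg at h
    exact hdne (hk d h)
  refine ⟨List.ofFn fun i : Fin d => f z i, ofFn_mem_segTree (Set.mem_range_self z) d, ?_, ?_⟩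
  · rw [hs]
    exact ofFn_prefix_ofFn (f z) hsd
  · refine ⟨f z d, ?_, f (zk k) d, ?_, hdne.symm⟩
    · show _ ∈ segTree _
      have : (List.ofFn fun i : Fin d => f z i) ++ [f z d]
          = List.ofFn fun i : Fin (d+1) => f z i := by
        rw [List.ofFn_succ' (fun i : Fin (d+1) => f z i)]
        simp [List.concat_eq_append]
      rw [this]
      exact ofFn_mem_segTree (Set.mem_range_self z) _
    · show _ ∈ segTree _
      have : (List.ofFn fun i : Fin d => f z i) ++ [f (zk k) d]
          = List.ofFn fun i : Fin (d+1) => f (zk k) i := by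
        rw [List.ofFn_succ' (fun i : Fin (d+1) => f (zk k) i)]
        simp only [List.concat_eq_append]
        congr 1
        apply List.ext_getElem
        · simp
        · intro i h1 h2
          simp only [List.getElem_ofFn]
          exact (hdlt i (by simpa using h1)).symm
      rw [this]
      exact ofFn_mem_segTree (Set.mem_range_self (zk k)) _


lemma forward_dir (B : Set (ℕ → ℕ)) (hB : MeasurableSet[borel (ℕ → ℕ)] B)
    (h : B ∈ treeIdeal {T | IsSacksTree T}) : B.Countable := by
  by_contra hc
  have hB' : MeasurableSet B := by
    rw [BorelSpace.measurable_eq (α := ℕ → ℕ)]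
    exact hB
  have main : ∃ f : (ℕ → Bool) → (ℕ → ℕ),
      Set.range f ⊆ B ∧ Continuous f ∧ Function.Injective f := by
    obtain ⟨t', ht'le, ht'polish, hclosed, -⟩ := hB'.isClopenable
    obtain ⟨f, hrange, hcontt', hinj⟩ :=
      @IsClosed.exists_nat_bool_injection_of_not_countable _ t' ht'polish B hclosed hc
    refine ⟨f, hrange, ?_, hinj⟩
    have h2 := @Continuous.comp (ℕ → Bool) (ℕ → ℕ) (ℕ → ℕ) Pi.topologicalSpace t'
      Pi.topologicalSpace f id (continuous_id_of_le ht'le) hcontt'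
    exact h2
  obtain ⟨f, hrange, hcont, hinj⟩ := main
  have hKclosed : IsClosed (Set.range f) := (isCompact_range hcont).isClosed
  obtain ⟨Q, hQ, hQsub, hQdisj⟩ := h (segTree (Set.range f)) (segTree_sacks hcont hinj)
  obtain ⟨x, hx⟩ := sacks_body_nonempty hQ
  have hxB : x ∈ B := hrange (treeBody_segTree_subset hKclosed (treeBody_mono hQsub hx))
  exact absurd hQdisj (by
    rw [Set.eq_empty_iff_forall_notMem]
    push_neg
    exact ⟨x, hx, hxB⟩)

/-! ### Backward direction: countable sets are in s₀ -/

/-- `l` lies along the branch `x` -/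
def along (x : ℕ → ℕ) (l : List ℕ) : Prop := ∀ i (h : i < l.length), l[i] = x i

lemma along_of_prefix {x : ℕ → ℕ} {l l' : List ℕ} (h : along x l') (hp : l <+: l') :
    along x l := by
  intro i hi
  rw [hp.getElem hi]
  exact h i (lt_of_lt_of_le hi hp.length_le)

lemma along_ofFn (x : ℕ → ℕ) (n : ℕ) : along x (List.ofFn fun i : Fin n => x i) := by
  intro i hi
  simp

/-- avoid a given branch inside a Sacks tree -/
lemma avoid_exists {P : Set (List ℕ)} (hP : IsSacksTree P) {s : List ℕ} (hs : s ∈ P)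
    (x : ℕ → ℕ) : ∃ t ∈ P, s <+: t ∧ ¬ along x t := by
  obtain ⟨u, huP, hsu, a, ha, b, hb, hab⟩ := hP.2 s hs
  have : a ≠ x u.length ∨ b ≠ x u.length := by
    by_contra h
    push_neg at h
    exact hab (h.1.trans h.2.symm)
  rcases this with h | h
  · refine ⟨u ++ [a], ha, hsu.trans ⟨[a], rfl⟩, fun hal => ?_⟩
    have := hal u.length (by simp)
    simp at this
    exact h this
  · refine ⟨u ++ [b], hb, hsu.trans ⟨[b], rfl⟩, fun hal => ?_⟩
    have := hal u.length (by simp)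
    simp at this
    exact h this

lemma step_exists {P : Set (List ℕ)} (hP : IsSacksTree P) {s : List ℕ} (hs : s ∈ P)
    (x : ℕ → ℕ) : ∃ d : List ℕ × ℕ × ℕ, d.1 ∈ P ∧ s <+: d.1 ∧ ¬ along x d.1 ∧
      d.2.1 ≠ d.2.2 ∧ d.1 ++ [d.2.1] ∈ P ∧ d.1 ++ [d.2.2] ∈ P := by
  obtain ⟨t, htP, hst, hal⟩ := avoid_exists hP hs x
  obtain ⟨u, huP, htu, a, ha, b, hb, hab⟩ := hP.2 t htP
  exact ⟨(u, a, b), huP, hst.trans htu, fun h => hal (along_of_prefix h htu),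
    hab, ha, hb⟩

open scoped Classical in
noncomputable def stepD (P : Set (List ℕ)) (x : ℕ → ℕ) (s : List ℕ) : List ℕ × ℕ × ℕ :=
  if h : IsSacksTree P ∧ s ∈ P then Classical.choose (step_exists h.1 h.2 x) else (s, 0, 0)

lemma stepD_spec {P : Set (List ℕ)} (hP : IsSacksTree P) {s : List ℕ} (hs : s ∈ P)
    (x : ℕ → ℕ) : (stepD P x s).1 ∈ P ∧ s <+: (stepD P x s).1 ∧ ¬ along x (stepD P x s).1 ∧
      (stepD P x s).2.1 ≠ (stepD P x s).2.2 ∧ (stepD P x s).1 ++ [(stepD P x s).2.1] ∈ P ∧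
      (stepD P x s).1 ++ [(stepD P x s).2.2] ∈ P := by
  rw [stepD]
  rw [dif_pos ⟨hP, hs⟩]
  exact Classical.choose_spec (step_exists hP hs x)

/-- the fusion scheme -/
noncomputable def sig (P : Set (List ℕ)) (e : ℕ → (ℕ → ℕ)) : List Bool → List ℕ
  | [] => []
  | b :: s => (stepD P (e s.length) (sig P e s)).1 ++
      [if b then (stepD P (e s.length) (sig P e s)).2.2
       else (stepD P (e s.length) (sig P e s)).2.1]

variable {P : Set (List ℕ)} {e : ℕ → (ℕ → ℕ)}

lemma sig_mem (hP : IsSacksTree P) (s : List Bool) : sig P e s ∈ P := by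
  induction s with
  | nil => exact nil_mem hP.1
  | cons b s ih =>
    obtain ⟨h1, h2, h3, h4, h5, h6⟩ := stepD_spec hP ih (e s.length)
    cases b
    · simpa [sig] using h5
    · simpa [sig] using h6

lemma sig_prefix_cons (hP : IsSacksTree P) (b : Bool) (s : List Bool) :
    sig P e s <+: sig P e (b :: s) := by
  obtain ⟨h1, h2, h3, h4, h5, h6⟩ := stepD_spec hP (sig_mem (e := e) hP s) (e s.length)
  exact h2.trans (show _ <+: sig P e (b :: s) from ⟨_, rfl⟩)

lemma sig_suffix (hP : IsSacksTree P) {s s' : List Bool} (h : s <:+ s') :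
    sig P e s <+: sig P e s' := by
  induction s' with
  | nil => rw [List.suffix_nil.mp h]
  | cons b s' ih =>
    rcases List.suffix_cons_iff.mp h with h | h
    · rw [h]
    · exact (ih h).trans (sig_prefix_cons hP b s')

lemma sig_len (hP : IsSacksTree P) (s : List Bool) : s.length ≤ (sig P e s).length := by
  induction s with
  | nil => simp
  | cons b s ih =>
    obtain ⟨h1, h2, h3, h4, h5, h6⟩ := stepD_spec hP (sig_mem (e := e) hP s) (e s.length)
    have hle := h2.length_le
    have hlen2 : (sig P e (b :: s)).length = (stepD P (e s.length) (sig P e s)).1.length + 1 := by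
      cases b <;> simp [sig]
    simp only [List.length_cons]
    omega

lemma sig_not_along (hP : IsSacksTree P) (b : Bool) (s : List Bool) :
    ¬ along (e s.length) (sig P e (b :: s)) := by
  obtain ⟨h1, h2, h3, h4, h5, h6⟩ := stepD_spec hP (sig_mem (e := e) hP s) (e s.length)
  intro hal
  refine h3 (along_of_prefix hal ?_)
  exact show _ <+: sig P e (b :: s) from ⟨_, rfl⟩

/-- the fusion subtree -/
def sigTree (P : Set (List ℕ)) (e : ℕ → (ℕ → ℕ)) : Set (List ℕ) :=
  {l | ∃ s : List Bool, l <+: sig P e s}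

lemma sigTree_subset (hP : IsSacksTree P) : sigTree P e ⊆ P := by
  rintro l ⟨s, hl⟩
  exact mem_of_prefix hP.1 (sig_mem (e := e) hP s) hl

lemma sigTree_sacks (hP : IsSacksTree P) : IsSacksTree (sigTree P e) := by
  refine ⟨⟨⟨[], [], List.nil_prefix⟩, ?_⟩, ?_⟩
  · rintro l ⟨s, hl⟩ n
    exact ⟨s, (List.take_prefix n l).trans hl⟩
  · rintro l ⟨s, hl⟩
    obtain ⟨h1, h2, h3, h4, h5, h6⟩ := stepD_spec hP (sig_mem (e := e) hP s) (e s.length)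
    set u := (stepD P (e s.length) (sig P e s)).1 with hu
    refine ⟨u, ⟨false :: s, ⟨_, rfl⟩⟩, hl.trans h2, ?_⟩
    refine ⟨(stepD P (e s.length) (sig P e s)).2.1, ⟨false :: s, ?_⟩,
      (stepD P (e s.length) (sig P e s)).2.2, ⟨true :: s, ?_⟩, h4⟩
    · show _ <+: sig P e (false :: s)
      simp [sig, hu]
    · show _ <+: sig P e (true :: s)
      simp [sig, hu]

lemma sigTree_body_avoid (hP : IsSacksTree P) {x : ℕ → ℕ} (hx : x ∈ treeBody (sigTree P e))
    (n : ℕ) : x ≠ e n := by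
  rintro rfl
  -- bound the lengths of sig over codes of length ≤ n+1
  have hfin : Set.Finite ((fun s => (sig P e s).length) '' {s : List Bool | s.length ≤ n + 1}) :=
    (List.finite_length_le Bool (n+1)).image _
  obtain ⟨L, hL⟩ := hfin.bddAbove
  have hLbound : ∀ s : List Bool, s.length ≤ n + 1 → (sig P e s).length ≤ L :=
    fun s hs => hL ⟨s, hs, rfl⟩
  -- the initial segment of x of length L+1 is a prefix of some sig s'
  obtain ⟨s', hs'⟩ := hx (L + 1)
  have hs'len : n + 1 < s'.length := by
    by_contra h
    push_neg at h
    have h1 : (sig P e s').length ≤ L := hLbound s' h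
    have h2 := hs'.length_le
    simp at h2
    omega
  set s := s'.drop (s'.length - (n + 1)) with hsdef
  have hslen : s.length = n + 1 := by
    rw [hsdef, List.length_drop]
    omega
  have hsuf : s <:+ s' := List.drop_suffix _ _
  have h1 : sig P e s <+: sig P e s' := sig_suffix hP hsuf
  have h2 : (sig P e s).length ≤ L := hLbound s (le_of_eq hslen)
  have h3 : sig P e s <+: (List.ofFn fun i : Fin (L+1) => e n i) :=
    List.prefix_of_prefix_length_le h1 hs' (by simpa using by omega)
  have h4 : along (e n) (sig P e s) := along_of_prefix (along_ofFn (e n) (L+1)) h3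
  -- but s = b :: s₂ with s₂.length = n, contradiction with sig_not_along
  obtain ⟨b, s₂, hbs⟩ : ∃ b s₂, s = b :: s₂ := by
    cases hs2 : s with
    | nil => rw [hs2] at hslen; simp at hslen
    | cons b s₂ => exact ⟨b, s₂, rfl⟩
  rw [hbs] at h4 hslen
  have hs₂len : s₂.length = n := by simpa using hslen
  exact sig_not_along hP b s₂ (hs₂len.symm ▸ h4)

lemma backward_dir (B : Set (ℕ → ℕ)) (hc : B.Countable) :
    B ∈ treeIdeal {T | IsSacksTree T} := by
  intro P hP
  rcases B.eq_empty_or_nonempty with rfl | hne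
  · exact ⟨P, hP, subset_rfl, by simp⟩
  obtain ⟨e, he⟩ := hc.exists_eq_range hne
  refine ⟨sigTree P e, sigTree_sacks hP, sigTree_subset hP, ?_⟩
  rw [Set.eq_empty_iff_forall_notMem]
  rintro x ⟨hx1, hx2⟩
  rw [he] at hx2
  obtain ⟨n, rfl⟩ := hx2
  exact sigTree_body_avoid hP hx1 n rfl

/-- a Borel set belongs to s₀ iff it is countable. -/
theorem stmt6 (B : Set (ℕ → ℕ)) (hB : MeasurableSet[borel (ℕ → ℕ)] B) :
    B ∈ treeIdeal {T | IsSacksTree T} ↔ B.Countable :=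
  ⟨forward_dir B hB, backward_dir B⟩
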